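/- arXiv:1205.1682 — 4 statements merged into one kernel-verified Lean document; each statement's English description precedes it below -/
import Mathlib

section
/- For sets X, Y ∈ Ω*_n (i.e., X = S_n(X) and Y = S_n(Y)), the intersection X ∩ Y also satisfies X ∩ Y ∈ Ω*_n, i.e., S_n(X ∩ Y) = X ∩ Y. -/
/-- The set of nodes `u` such that every directed path from `u` to the sink `n`
(a nonempty list of vertices, consecutive ones joined by edges) visits a node of `B`. -/
def blockedBy {V : Type*} (E : V → V → Prop) (n : V) (B : Set V) : Set V :=
  {u | ∀ l : List V, l.Chain' E → l.head? = some u → l.getLast? = some n →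
        ∃ x ∈ l, x ∈ B}

/-- `Ω*_n` is closed under intersection: if `S_n(X) = X` and `S_n(Y) = Y`
then `S_n(X ∩ Y) = X ∩ Y`. -/
theorem blockedBy_inter {V : Type*} [Fintype V] (E : V → V → Prop) (n : V) (X Y : Set V)
    (hX : blockedBy E n X = X) (hY : blockedBy E n Y = Y) :
    blockedBy E n (X ∩ Y) = X ∩ Y := by
  ext u
  constructor
  · intro hu
    constructor
    · rw [← hX]
      intro l hc hh hl
      obtain ⟨x, hx, hxX, _⟩ := hu l hc hh hl
      exact ⟨x, hx, hxX⟩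
    · rw [← hY]
      intro l hc hh hl
      obtain ⟨x, hx, _, hxY⟩ := hu l hc hh hl
      exact ⟨x, hx, hxY⟩
  · rintro ⟨huX, huY⟩ l _ hh _
    exact ⟨u, List.mem_of_mem_head? (by simp [hh]), huX, huY⟩
end

section
/- Online bound for submodular maximization: let F : 2^V → ℝ be monotone submodular, Â ⊆ V any set, and for a ∈ V \ Â let δ_a = F(Â ∪ {a}) − F(Â). If a_1, …, a_k are the k elements of V \ Â with largest δ values (in decreasing order), then max_{|A| ≤ k} F(A) ≤ F(Â) + Σ_{i=1}^k δ_{a_i}. -/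
/-- Online bound for submodular maximization: for a monotone submodular `F`, any set `Â`
and `a_1, …, a_k` the `k` elements of `V \ Â` with largest marginal gains
`δ_a = F(Â ∪ {a}) − F(Â)` in decreasing order,
`max_{|A| ≤ k} F(A) ≤ F(Â) + Σ_i δ_{a_i}`. -/
theorem online_bound {V : Type*} [DecidableEq V] [Fintype V]
    (F : Finset V → ℝ)
    (hmono : ∀ A B : Finset V, A ⊆ B → F A ≤ F B)
    (hsub : ∀ A B : Finset V, A ⊆ B → ∀ s ∉ B,
      F (insert s B) - F B ≤ F (insert s A) - F A)
    (Ahat : Finset V) (k : ℕ) (a : Fin k → V)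
    (hinj : Function.Injective a) (hnot : ∀ i, a i ∉ Ahat)
    (hdec : ∀ i j : Fin k, i ≤ j →
      F (insert (a j) Ahat) - F Ahat ≤ F (insert (a i) Ahat) - F Ahat)
    (hbest : ∀ b ∉ Ahat, (∀ i, b ≠ a i) →
      ∀ i, F (insert b Ahat) - F Ahat ≤ F (insert (a i) Ahat) - F Ahat)
    (A : Finset V) (hA : A.card ≤ k) :
    F A ≤ F Ahat + ∑ i, (F (insert (a i) Ahat) - F Ahat) := by
  classical
  set δ : V → ℝ := fun b => F (insert b Ahat) - F Ahat with hδ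
  have hδnonneg : ∀ b, 0 ≤ δ b := fun b => by
    have := hmono Ahat (insert b Ahat) (Finset.subset_insert _ _)
    simp [hδ]; linarith
  -- Step 1: F (Ahat ∪ S) ≤ F Ahat + ∑_{b ∈ S} δ b for S disjoint from Ahat
  have hstep : ∀ S : Finset V, (∀ s ∈ S, s ∉ Ahat) →
      F (Ahat ∪ S) ≤ F Ahat + ∑ b ∈ S, δ b := by
    intro S
    induction S using Finset.induction_on with
    | empty => intro _; simp
    | @insert s S' hsS' ih =>
      intro hdisj
      have hsA : s ∉ Ahat := hdisj s (Finset.mem_insert_self _ _)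
      have hsU : s ∉ Ahat ∪ S' := by simp [hsA, hsS']
      have h1 : Ahat ∪ insert s S' = insert s (Ahat ∪ S') := by
        ext x; simp [or_left_comm, or_comm]
      have h2 := hsub Ahat (Ahat ∪ S') Finset.subset_union_left s hsU
      have h3 := ih (fun t ht => hdisj t (Finset.mem_insert_of_mem ht))
      rw [h1, Finset.sum_insert hsS']
      have : F (insert s (Ahat ∪ S')) ≤ F (Ahat ∪ S') + δ s := by
        simp only [hδ]; linarith
      linarith
  -- Step 2: F A ≤ F (Ahat ∪ (A \ Ahat))
  set S := A \ Ahat with hS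
  have hAsub : A ⊆ Ahat ∪ S := by
    intro x hx
    by_cases h : x ∈ Ahat <;> simp [hS, h, hx]
  have h1 : F A ≤ F Ahat + ∑ b ∈ S, δ b :=
    le_trans (hmono _ _ hAsub) (hstep S (fun s hs => (Finset.mem_sdiff.mp hs).2))
  -- Step 3: ∑_{b ∈ S} δ b ≤ ∑ i, δ (a i)
  set T : Finset V := Finset.image a Finset.univ with hT
  have hTcard : T.card = k := by
    rw [hT, Finset.card_image_of_injective _ hinj, Finset.card_univ, Fintype.card_fin]
  have hScard : S.card ≤ k := le_trans (Finset.card_le_card Finset.sdiff_subset) hA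
  have hsumT : ∑ b ∈ T, δ b = ∑ i, δ (a i) :=
    Finset.sum_image (fun x _ y _ h => hinj h)
  have hcard1 : (S ∩ T).card + (S \ T).card = S.card := Finset.card_inter_add_card_sdiff S T
  have hcard2 : (T ∩ S).card + (T \ S).card = T.card := Finset.card_inter_add_card_sdiff T S
  have hinter : (T ∩ S).card = (S ∩ T).card := by rw [Finset.inter_comm]
  have hcardle : (S \ T).card ≤ (T \ S).card := by omega
  obtain ⟨U, hUsub, hUcard⟩ := Finset.exists_subset_card_eq hcardle
  have e : (S \ T : Finset V) ≃ (U : Finset V) := Finset.equivOfCardEq hUcard.symm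
  have hptwise : ∀ x : (S \ T : Finset V), δ (x : V) ≤ δ ((e x : V)) := by
    rintro ⟨x, hx⟩
    obtain ⟨hxS, hxT⟩ := Finset.mem_sdiff.mp hx
    have hxA : x ∉ Ahat := (Finset.mem_sdiff.mp (hS ▸ hxS)).2
    have hxne : ∀ i, x ≠ a i := by
      intro i h
      exact hxT (by rw [hT]; exact Finset.mem_image.mpr ⟨i, Finset.mem_univ i, h.symm⟩)
    have heU : (e ⟨x, hx⟩ : V) ∈ T := (Finset.mem_sdiff.mp (hUsub (e ⟨x, hx⟩).2)).1
    have heU2 : (↑(e ⟨x, hx⟩) : V) ∈ Finset.image a Finset.univ := heU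
    obtain ⟨i, _, hi⟩ := Finset.mem_image.mp heU2
    have := hbest x hxA hxne i
    simp only [hδ]
    rw [hi] at this
    exact this
  have hsum1 : ∑ b ∈ S \ T, δ b ≤ ∑ b ∈ U, δ b := by
    rw [← Finset.sum_attach (S \ T) δ, ← Finset.sum_attach U δ]
    calc ∑ x : (S \ T : Finset V), δ (x : V)
        ≤ ∑ x : (S \ T : Finset V), δ ((e x : V)) := Finset.sum_le_sum (fun x _ => hptwise x)
      _ = ∑ y : (U : Finset V), δ (y : V) := Equiv.sum_comp e (fun y => δ (y : V))
  have hsum2 : ∑ b ∈ U, δ b ≤ ∑ b ∈ T \ S, δ b :=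
    Finset.sum_le_sum_of_subset_of_nonneg hUsub (fun b _ _ => hδnonneg b)
  have hsplitS : ∑ b ∈ S ∩ T, δ b + ∑ b ∈ S \ T, δ b = ∑ b ∈ S, δ b :=
    Finset.sum_inter_add_sum_sdiff S T δ
  have hsplitT : ∑ b ∈ T ∩ S, δ b + ∑ b ∈ T \ S, δ b = ∑ b ∈ T, δ b :=
    Finset.sum_inter_add_sum_sdiff T S δ
  have hic : ∑ b ∈ T ∩ S, δ b = ∑ b ∈ S ∩ T, δ b := by rw [Finset.inter_comm]
  have hmain : ∑ b ∈ S, δ b ≤ ∑ i, δ (a i) := by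
    rw [← hsumT]
    linarith
  calc F A ≤ F Ahat + ∑ b ∈ S, δ b := h1
    _ ≤ F Ahat + ∑ i, δ (a i) := by linarith
end

section
/- Greedy guarantee: if F : 2^V → ℝ≥0 is monotone submodular with F(∅) = 0, and A_k is the set produced by k steps of the greedy algorithm (each step adding an element of maximal marginal gain), then F(A_k) ≥ (1 − 1/e) · max_{|A| ≤ k} F(A). More precisely, F(A_k) ≥ (1 − (1 − 1/k)^k) OPT. -/
/-- Greedy guarantee (Nemhauser–Wolsey–Fisher): for a monotone submodular `F` with
`F(∅) = 0`, the set `A k` produced by `k` greedy steps satisfies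
`F(A k) ≥ (1 − (1 − 1/k)^k)·OPT ≥ (1 − 1/e)·OPT` where `OPT = max_{|A| ≤ k} F(A)`. -/
theorem greedy_guarantee {V : Type*} [DecidableEq V] [Fintype V] [Nonempty V]
    (F : Finset V → ℝ)
    (hmono : ∀ A B : Finset V, A ⊆ B → F A ≤ F B)
    (hsub : ∀ A B : Finset V, A ⊆ B → ∀ s ∉ B,
      F (insert s B) - F B ≤ F (insert s A) - F A)
    (hempty : F ∅ = 0)
    (k : ℕ) (hk : 0 < k)
    (A : ℕ → Finset V) (hA0 : A 0 = ∅)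
    (hgreedy : ∀ i < k, ∃ a ∉ A i, A (i + 1) = insert a (A i) ∧
      ∀ b ∉ A i, F (insert b (A i)) ≤ F (insert a (A i)))
    (S : Finset V) (hS : S.card ≤ k) :
    (1 - (1 - 1 / (k : ℝ)) ^ k) * F S ≤ F (A k) ∧
    (1 - 1 / Real.exp 1) * F S ≤ F (A k) := by
  have hFS0 : 0 ≤ F S := hempty ▸ hmono ∅ S (Finset.empty_subset S)
  have hk' : (0:ℝ) < k := by exact_mod_cast hk
  -- telescoping bound
  have tele : ∀ (T B : Finset V), F (B ∪ T) - F B ≤ ∑ s ∈ T, (F (insert s B) - F B) := by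
    intro T
    induction T using Finset.induction_on with
    | empty => intro B; simp
    | insert _ _ ha =>
      rename_i a T' ih
      intro B
      rw [Finset.sum_insert ha]
      have h1 : B ∪ insert a T' = insert a (B ∪ T') := Finset.union_insert a B T'
      rw [h1]
      by_cases hab : a ∈ B
      · have e1 : insert a (B ∪ T') = B ∪ T' :=
          Finset.insert_eq_self.2 (Finset.mem_union_left _ hab)
        have e2 : insert a B = B := Finset.insert_eq_self.2 hab
        rw [e1, e2]
        have := ih B
        linarith
      · have hnot : a ∉ B ∪ T' := by
          simp only [Finset.mem_union]; tauto
        have h2 := hsub B (B ∪ T') Finset.subset_union_left a hnot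
        have := ih B
        linarith
  -- one-step decay
  have step : ∀ i < k, F S - F (A (i+1)) ≤ (1 - 1/(k:ℝ)) * (F S - F (A i)) := by
    intro i hi
    obtain ⟨a, haA, hA1, hmax⟩ := hgreedy i hi
    have hmonoAi : F (A i) ≤ F (A (i+1)) := by
      rw [hA1]; exact hmono _ _ (Finset.subset_insert a (A i))
    have h1 : F S ≤ F (A i ∪ S) := hmono S _ Finset.subset_union_right
    have h2 := tele S (A i)
    have hbound : ∀ s ∈ S, F (insert s (A i)) - F (A i) ≤ F (A (i+1)) - F (A i) := by
      intro s _
      by_cases hsA : s ∈ A i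
      · rw [Finset.insert_eq_self.2 hsA]; linarith
      · have := hmax s hsA; rw [hA1]; linarith
    have h3 : ∑ s ∈ S, (F (insert s (A i)) - F (A i)) ≤
        S.card • (F (A (i+1)) - F (A i)) :=
      Finset.sum_le_card_nsmul _ _ _ hbound
    rw [nsmul_eq_mul] at h3
    have hcard : (S.card : ℝ) ≤ k := by exact_mod_cast hS
    have h4 : (S.card:ℝ) * (F (A (i+1)) - F (A i)) ≤ (k:ℝ) * (F (A (i+1)) - F (A i)) :=
      mul_le_mul_of_nonneg_right hcard (by linarith)
    have key : F S - F (A i) ≤ (k:ℝ) * (F (A (i+1)) - F (A i)) := by linarith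
    have key2 : (1/(k:ℝ)) * (F S - F (A i)) ≤ F (A (i+1)) - F (A i) := by
      rw [one_div, inv_mul_le_iff₀ hk']
      exact key
    have e1 : (1 - 1/(k:ℝ)) * (F S - F (A i)) =
        (F S - F (A i)) - (1/(k:ℝ)) * (F S - F (A i)) := by ring
    rw [e1]; linarith
  have hc0 : 0 ≤ 1 - 1/(k:ℝ) := by
    have h1 : 1/(k:ℝ) ≤ 1 := by
      rw [div_le_one hk']; exact_mod_cast hk
    linarith
  have main : ∀ i ≤ k, F S - F (A i) ≤ (1 - 1/(k:ℝ))^i * F S := by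
    intro i
    induction i with
    | zero => intro _; simp [hA0, hempty]
    | succ n ih =>
      intro hn
      have hn' : n < k := hn
      have h1 := step n hn'
      have h2 := ih (le_of_lt hn')
      calc F S - F (A (n+1)) ≤ (1 - 1/(k:ℝ)) * (F S - F (A n)) := h1
        _ ≤ (1 - 1/(k:ℝ)) * ((1 - 1/(k:ℝ))^n * F S) := mul_le_mul_of_nonneg_left h2 hc0
        _ = (1 - 1/(k:ℝ))^(n+1) * F S := by ring
  have hmain := main k le_rfl
  have hfirst : (1 - (1 - 1 / (k : ℝ)) ^ k) * F S ≤ F (A k) := by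
    have e1 : (1 - (1 - 1 / (k : ℝ)) ^ k) * F S =
        F S - (1 - 1/(k:ℝ))^k * F S := by ring
    rw [e1]; linarith
  refine ⟨hfirst, ?_⟩
  have hce : (1 - 1/(k:ℝ))^k ≤ 1 / Real.exp 1 := by
    have h1 : 1 - 1/(k:ℝ) ≤ Real.exp (-(1/(k:ℝ))) := by
      have := Real.add_one_le_exp (-(1/(k:ℝ)))
      linarith
    have h2 : (1 - 1/(k:ℝ))^k ≤ (Real.exp (-(1/(k:ℝ))))^k := pow_le_pow_left₀ hc0 h1 k
    have h3 : (Real.exp (-(1/(k:ℝ))))^k = Real.exp ((k:ℝ) * (-(1/(k:ℝ)))) := by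
      rw [← Real.exp_nat_mul]
    have hkne : (k:ℝ) ≠ 0 := ne_of_gt hk'
    have h4 : (k:ℝ) * (-(1/(k:ℝ))) = -1 := by field_simp
    rw [h3, h4, Real.exp_neg, ← one_div] at h2
    exact h2
  have h5 : (1 - 1/(k:ℝ))^k * F S ≤ (1 / Real.exp 1) * F S :=
    mul_le_mul_of_nonneg_right hce hFS0
  have e2 : (1 - 1 / Real.exp 1) * F S = F S - (1 / Real.exp 1) * F S := by ring
  rw [e2]; linarith
end

section
/- In each greedy step applied to a monotone submodular function, the gain satisfies F(A_{i+1}) − F(A_i) ≥ (OPT − F(A_i)) / k, where OPT = max_{|A| ≤ k} F(A). -/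
/-- Key inductive lemma of the greedy analysis: in each greedy step applied to a monotone
submodular function, the gain satisfies `F(A_{i+1}) − F(A_i) ≥ (OPT − F(A_i))/k`. -/
theorem greedy_step_gain {V : Type*} [DecidableEq V] [Fintype V]
    (F : Finset V → ℝ)
    (hmono : ∀ A B : Finset V, A ⊆ B → F A ≤ F B)
    (hsub : ∀ A B : Finset V, A ⊆ B → ∀ s ∉ B,
      F (insert s B) - F B ≤ F (insert s A) - F A)
    (Ai : Finset V) (a : V) (ha : a ∉ Ai)
    (hmax : ∀ b ∉ Ai, F (insert b Ai) ≤ F (insert a Ai))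
    (k : ℕ) (hk : 0 < k) (S : Finset V) (hS : S.card ≤ k) :
    (F S - F Ai) / (k : ℝ) ≤ F (insert a Ai) - F Ai := by
  set g : ℝ := F (insert a Ai) - F Ai with hg
  have hg0 : 0 ≤ g := by
    have := hmono Ai (insert a Ai) (Finset.subset_insert _ _)
    linarith
  -- key bound: F (Ai ∪ T) - F Ai ≤ |T \ Ai| * g for all T
  have key : ∀ T : Finset V, F (Ai ∪ T) - F Ai ≤ ((T \ Ai).card : ℝ) * g := by
    intro T
    induction T using Finset.induction_on with
    | empty => simp
    | @insert s T hsT ih =>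
      by_cases hsA : s ∈ Ai
      · have h1 : Ai ∪ insert s T = Ai ∪ T := by
          rw [Finset.union_insert, Finset.insert_eq_self.mpr (Finset.mem_union_left _ hsA)]
        have h2 : insert s T \ Ai = T \ Ai := by
          rw [Finset.insert_sdiff_of_mem _ hsA]
        rw [h1, h2]; exact ih
      · by_cases hsU : s ∈ Ai ∪ T
        · have : Ai ∪ insert s T = Ai ∪ T := by
            rw [Finset.union_insert, Finset.insert_eq_self.mpr hsU]
          rw [this]
          have hcard : (T \ Ai).card ≤ (insert s T \ Ai).card :=
            Finset.card_le_card (Finset.sdiff_subset_sdiff (Finset.subset_insert _ _) le_rfl)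
          calc F (Ai ∪ T) - F Ai ≤ ((T \ Ai).card : ℝ) * g := ih
            _ ≤ ((insert s T \ Ai).card : ℝ) * g := by
                exact mul_le_mul_of_nonneg_right (by exact_mod_cast hcard) hg0
        · have h1 : Ai ∪ insert s T = insert s (Ai ∪ T) := by
            rw [Finset.union_insert]
          have step : F (insert s (Ai ∪ T)) - F (Ai ∪ T) ≤ g := by
            have h2 := hsub Ai (Ai ∪ T) Finset.subset_union_left s hsU
            have h3 := hmax s hsA
            rw [hg]; linarith
          have hcard : (insert s T \ Ai).card = (T \ Ai).card + 1 := by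
            rw [Finset.insert_sdiff_of_notMem _ hsA,
              Finset.card_insert_of_notMem (by simp [hsT])]
          rw [h1, hcard]
          push_cast
          have := ih
          nlinarith [step]
  have hFS : F S ≤ F (Ai ∪ S) := hmono _ _ Finset.subset_union_right
  have hcard : ((S \ Ai).card : ℝ) ≤ (k : ℝ) := by
    exact_mod_cast le_trans (Finset.card_le_card (Finset.sdiff_subset)) hS
  have hk' : (0:ℝ) < k := by exact_mod_cast hk
  rw [div_le_iff₀ hk']
  have := key S
  nlinarith
end
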